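/- Let F be a semifilter on ℕ. Then F is comeager as a subset of the Cantor space P(ω) if and only if there exists a finite-to-one function h : ℕ → ℕ such that {h[x] : x ∈ F} is exactly the set of all infinite subsets of ℕ. -/

import Mathlib

open MeasureTheory Set

/-- Identify a subset of ℕ with a point of the Cantor space `ℕ → Bool`. -/
noncomputable def toCantor (x : Set ℕ) : ℕ → Bool :=
  fun n => @decide (n ∈ x) (Classical.dec _)

/-- A semifilter on ℕ: a nonempty proper collection of subsets of ℕ closed under supersets
and under finite changes. -/
def IsSemifilter (F : Set (Set ℕ)) : Prop :=
  F.Nonempty ∧ F ≠ Set.univ ∧ (∀ x ∈ F, ∀ y : Set ℕ, x ⊆ y → y ∈ F) ∧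
    (∀ x ∈ F, ∀ y : Set ℕ, (symmDiff x y).Finite → y ∈ F)

/-- The family `{h[x] : x ∈ F}` of images of members of `F` under `h`. -/
def imgFam (h : ℕ → ℕ) (F : Set (Set ℕ)) : Set (Set ℕ) :=
  (fun x : Set ℕ => h '' x) '' F

/-- `h` is finite-to-one if every fiber is finite. -/
def FinToOne (h : ℕ → ℕ) : Prop := ∀ n : ℕ, (h ⁻¹' {n}).Finite

namespace Stmt16

/-! ### Basic bridge between `Set ℕ` and the Cantor space -/

def fromC (f : ℕ → Bool) : Set ℕ := {n | f n = true}

lemma fromC_mem {f : ℕ → Bool} {n : ℕ} : n ∈ fromC f ↔ f n = true := Iff.rfl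

lemma toCantor_fromC (f : ℕ → Bool) : toCantor (fromC f) = f := by
  funext n
  by_cases h : f n <;> simp [toCantor, fromC, h]

lemma fromC_toCantor (x : Set ℕ) : fromC (toCantor x) = x := by
  ext n; simp [toCantor, fromC]

lemma toCantor_mem (x : Set ℕ) (i : ℕ) : toCantor x i = true ↔ i ∈ x := by
  simp [toCantor]

lemma mem_image_toCantor {F : Set (Set ℕ)} {f : ℕ → Bool} :
    f ∈ toCantor '' F ↔ fromC f ∈ F := by
  constructor
  · rintro ⟨x, hx, rfl⟩; rwa [fromC_toCantor]
  · intro h; exact ⟨fromC f, h, toCantor_fromC f⟩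

/-! ### Topological lemmas on the Cantor space -/

lemma exists_cylinder {U : Set (ℕ → Bool)} (hU : IsOpen U) {g : ℕ → Bool} (hg : g ∈ U) :
    ∃ N : ℕ, ∀ g' : ℕ → Bool, (∀ i < N, g' i = g i) → g' ∈ U := by
  have h1 : U ∈ nhds g := hU.mem_nhds hg
  rw [nhds_pi, Filter.mem_pi'] at h1
  obtain ⟨I, t, ht, hsub⟩ := h1
  refine ⟨(I.sup id) + 1, fun g' hg' => hsub ?_⟩
  intro i hi
  rw [hg' i (Nat.lt_succ_of_le (Finset.le_sup (f := id) hi))]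
  have := ht i
  rwa [nhds_discrete, Filter.mem_pure] at this

lemma isOpen_blockTrue (a b : ℕ) :
    IsOpen {f : ℕ → Bool | ∀ i, a ≤ i → i < b → f i = true} := by
  have he : {f : ℕ → Bool | ∀ i, a ≤ i → i < b → f i = true}
      = ⋂ i ∈ Finset.Ico a b, (fun f : ℕ → Bool => f i) ⁻¹' {true} := by
    ext f
    simp only [Set.mem_setOf_eq, Set.mem_iInter, Finset.mem_Ico, Set.mem_preimage,
      Set.mem_singleton_iff]
    exact ⟨fun h i hi => h i hi.1 hi.2, fun h i h1 h2 => h i ⟨h1, h2⟩⟩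
  rw [he]
  exact isOpen_biInter_finset fun i _ =>
    (continuous_apply i : Continuous fun f : ℕ → Bool => f i).isOpen_preimage ({true} : Set Bool) (isOpen_discrete _)

lemma infinite_of_forall_exists {P : ℕ → Prop} (h : ∀ m, ∃ k, m ≤ k ∧ P k) :
    {k | P k}.Infinite := by
  apply Set.infinite_of_not_bddAbove
  rintro ⟨M, hM⟩
  obtain ⟨k, hk, hPk⟩ := h (M + 1)
  exact absurd (hM hPk) (by omega)

lemma exists_ge_of_infinite {S : Set ℕ} (hS : S.Infinite) (m : ℕ) : ∃ k ∈ S, m ≤ k := by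
  obtain ⟨k, hk, hmk⟩ := hS.exists_gt m
  exact ⟨k, hk, hmk.le⟩

lemma blocks_mem_residual (a b : ℕ → ℕ) (ha : ∀ k, k ≤ a k) :
    {f : ℕ → Bool | ∀ m, ∃ k, m ≤ k ∧ ∀ i, a k ≤ i → i < b k → f i = true}
      ∈ residual (ℕ → Bool) := by
  have he : {f : ℕ → Bool | ∀ m, ∃ k, m ≤ k ∧ ∀ i, a k ≤ i → i < b k → f i = true}
      = ⋂ m : ℕ, ⋃ k : ℕ, ⋃ _ : m ≤ k, {f : ℕ → Bool | ∀ i, a k ≤ i → i < b k → f i = true} := by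
    ext f
    simp only [Set.mem_setOf_eq, Set.mem_iInter, Set.mem_iUnion]
    exact ⟨fun h m => by obtain ⟨k, h1, h2⟩ := h m; exact ⟨k, h1, h2⟩,
      fun h m => by obtain ⟨k, h1, h2⟩ := h m; exact ⟨k, h1, h2⟩⟩
  rw [he, countable_iInter_mem]
  intro m
  apply residual_of_dense_open
  · exact isOpen_iUnion fun k => isOpen_iUnion fun _ => isOpen_blockTrue _ _
  · rw [dense_iff_inter_open]
    rintro V hV ⟨g, hg⟩
    obtain ⟨N, hN⟩ := exists_cylinder hV hg
    classical
    refine ⟨fun i => if a (N + m) ≤ i ∧ i < b (N + m) then true else g i, ?_, ?_⟩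
    · apply hN
      intro i hi
      have : ¬ (a (N + m) ≤ i ∧ i < b (N + m)) := by
        intro ⟨h1, _⟩
        have := ha (N + m)
        omega
      simp [this]
    · simp only [Set.mem_iUnion]
      refine ⟨N + m, by omega, fun i h1 h2 => ?_⟩
      simp [h1, h2]

lemma finToOne_image_infinite {h : ℕ → ℕ} (hh : FinToOne h) {x : Set ℕ} (hx : x.Infinite) :
    (h '' x).Infinite := by
  intro hfin
  apply hx
  have hsub : x ⊆ ⋃ v ∈ h '' x, h ⁻¹' {v} := fun i hi =>
    Set.mem_biUnion (Set.mem_image_of_mem h hi) rfl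
  exact ((hfin.biUnion fun v _ => hh v)).subset hsub

lemma mem_semifilter_infinite {F : Set (Set ℕ)} (hF : IsSemifilter F) {x : Set ℕ}
    (hx : x ∈ F) : x.Infinite := by
  obtain ⟨hne, hproper, hup, hfin⟩ := hF
  by_contra hcon
  rw [Set.not_infinite] at hcon
  have h0 : (∅ : Set ℕ) ∈ F := hfin x hx ∅ (by simpa [Set.symmDiff_def] using hcon)
  exact hproper (Set.eq_univ_of_forall fun y => hup ∅ h0 y (Set.empty_subset y))

/-! ### Flipping finitely many coordinates -/

def bflip (s : Finset ℕ) (f : ℕ → Bool) : ℕ → Bool := fun i => if i ∈ s then !(f i) else f i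

lemma bflip_def (s : Finset ℕ) (f : ℕ → Bool) (i : ℕ) :
    bflip s f i = if i ∈ s then !(f i) else f i := rfl

lemma bflip_bflip (s : Finset ℕ) (f : ℕ → Bool) : bflip s (bflip s f) = f := by
  funext i
  by_cases h : i ∈ s <;> simp [bflip, h]

lemma continuous_bflip (s : Finset ℕ) : Continuous (bflip s) := by
  apply continuous_pi
  intro i
  by_cases h : i ∈ s <;> simp only [bflip, h, if_true, if_false]
  · exact (continuous_of_discreteTopology (f := fun b : Bool => !b)).comp (continuous_apply i)
  · exact continuous_apply i

lemma dense_bflip_preimage {U : Set (ℕ → Bool)} (hd : Dense U) (s : Finset ℕ) :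
    Dense (bflip s ⁻¹' U) := by
  rw [dense_iff_inter_open]
  rintro V hV ⟨g, hg⟩
  have hV' : IsOpen (bflip s ⁻¹' V) := (continuous_bflip s).isOpen_preimage V hV
  have hne : (bflip s ⁻¹' V).Nonempty := ⟨bflip s g, by simp [Set.mem_preimage, bflip_bflip, hg]⟩
  obtain ⟨u, hu1, hu2⟩ := hd.inter_open_nonempty _ hV' hne
  exact ⟨bflip s u, hu1, by simp [Set.mem_preimage, bflip_bflip, hu2]⟩

/-! ### The block decomposition associated with a strictly monotone sequence -/

def blockOf (n : ℕ → ℕ) (i : ℕ) : ℕ := Nat.findGreatest (fun k => n k ≤ i) i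

lemma blockOf_spec {n : ℕ → ℕ} (hmono : StrictMono n) (h0 : n 0 = 0) (i : ℕ) :
    n (blockOf n i) ≤ i ∧ i < n (blockOf n i + 1) := by
  have hle : n (blockOf n i) ≤ i := by
    have := Nat.findGreatest_spec (P := fun k => n k ≤ i) (m := 0) (n := i) (Nat.zero_le _)
      (by simp [h0])
    exact this
  refine ⟨hle, ?_⟩
  by_contra hcon
  push_neg at hcon
  have hb : blockOf n i + 1 ≤ i := le_trans (hmono.le_apply) hcon
  have := Nat.le_findGreatest (P := fun k => n k ≤ i) hb hcon
  simp only [blockOf] at this ⊢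
  omega

lemma blockOf_eq {n : ℕ → ℕ} (hmono : StrictMono n) (h0 : n 0 = 0) {i k : ℕ}
    (h1 : n k ≤ i) (h2 : i < n (k + 1)) : blockOf n i = k := by
  obtain ⟨ha, hb⟩ := blockOf_spec hmono h0 i
  rcases lt_trichotomy (blockOf n i) k with h | h | h
  · have : n (blockOf n i + 1) ≤ n k := hmono.monotone h
    omega
  · exact h
  · have : n (k + 1) ≤ n (blockOf n i) := hmono.monotone h
    omega

/-! ### Forward direction: comeager semifilter yields interval blocks inside `F` -/

lemma forward_core {F : Set (Set ℕ)}
    (hup : ∀ x ∈ F, ∀ y : Set ℕ, x ⊆ y → y ∈ F)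
    (hres : toCantor '' F ∈ residual (ℕ → Bool)) :
    ∃ n : ℕ → ℕ, StrictMono n ∧ n 0 = 0 ∧
      ∀ x : Set ℕ, ({k | ∀ i, n k ≤ i → i < n (k + 1) → i ∈ x}.Infinite) → x ∈ F := by
  classical
  rw [mem_residual_iff] at hres
  obtain ⟨S, hSo, hSd, hSc, hSsub⟩ := hres
  obtain ⟨U, hUo, hUd, hUsub⟩ :
      ∃ U : ℕ → Set (ℕ → Bool), (∀ m, IsOpen (U m)) ∧ (∀ m, Dense (U m)) ∧
        (⋂ m, U m) ⊆ toCantor '' F := by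
    rcases S.eq_empty_or_nonempty with h | h
    · refine ⟨fun _ => Set.univ, fun _ => isOpen_univ, fun _ => dense_univ, ?_⟩
      intro f _
      apply hSsub
      simp [h]
    · obtain ⟨g, hg⟩ := hSc.exists_eq_range h
      refine ⟨g, ?_, ?_, ?_⟩
      · intro m; exact hSo _ (hg ▸ Set.mem_range_self m)
      · intro m; exact hSd _ (hg ▸ Set.mem_range_self m)
      · intro f hf
        apply hSsub
        rw [hg, Set.sInter_range]
        exact hf
  have hWd : Dense (⋂ p : ℕ × Finset ℕ, bflip p.2 ⁻¹' U p.1) :=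
    dense_iInter_of_isOpen
      (fun p => (continuous_bflip p.2).isOpen_preimage _ (hUo p.1))
      (fun p => dense_bflip_preimage (hUd p.1) p.2)
  obtain ⟨z, hz⟩ := hWd.nonempty
  have hzmem : ∀ (m : ℕ) (s : Finset ℕ), z ∈ bflip s ⁻¹' U m := by
    intro m s
    exact Set.mem_iInter.1 hz (m, s)
  have step : ∀ N k : ℕ, ∃ N', N < N' ∧
      ∀ x : ℕ → Bool, (∀ i, N ≤ i → i < N' → x i = z i) → ∀ m ≤ k, x ∈ U m := by
    intro N k
    set O : Set (ℕ → Bool) :=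
      ⋂ p ∈ (Finset.range (k + 1)) ×ˢ (Finset.range N).powerset, bflip p.2 ⁻¹' U p.1 with hO
    have hOopen : IsOpen O :=
      isOpen_biInter_finset fun p _ => (continuous_bflip p.2).isOpen_preimage _ (hUo p.1)
    have hzO : z ∈ O := by
      rw [hO, Set.mem_iInter₂]
      intro p _
      exact hzmem p.1 p.2
    obtain ⟨N₀, hN₀⟩ := exists_cylinder hOopen hzO
    refine ⟨max (N + 1) N₀, by omega, ?_⟩
    intro x hx m hm
    set x' : ℕ → Bool := fun i => if i < N then z i else x i with hx'
    have hx'O : x' ∈ O := by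
      apply hN₀
      intro i hi
      by_cases hiN : i < N
      · simp [hx', hiN]
      · simp only [hx', if_neg hiN]
        exact hx i (by omega) (by omega)
    set s : Finset ℕ := (Finset.range N).filter (fun i => ¬ (x i = x' i)) with hs
    have hflip : bflip s x' = x := by
      funext i
      rw [bflip_def]
      by_cases hmem : i ∈ s
      · rw [if_pos hmem]
        rw [hs] at hmem
        simp only [Finset.mem_filter, Finset.mem_range] at hmem
        rcases Bool.eq_false_or_eq_true (x' i) with h' | h' <;>
          rcases Bool.eq_false_or_eq_true (x i) with h'' | h'' <;>
            simp_all
      · rw [if_neg hmem]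
        rw [hs] at hmem
        simp only [Finset.mem_filter, Finset.mem_range, not_and, not_not] at hmem
        by_cases hiN : i < N
        · exact (hmem hiN).symm
        · simp [hx', hiN]
    have : x' ∈ bflip s ⁻¹' U m := by
      have hp : (m, s) ∈ (Finset.range (k + 1)) ×ˢ (Finset.range N).powerset := by
        rw [Finset.mem_product]
        constructor
        · simpa using Nat.lt_succ_of_le hm
        · rw [Finset.mem_powerset, hs]
          exact Finset.filter_subset _ _
      exact Set.mem_iInter₂.1 hx'O (m, s) hp
    rw [Set.mem_preimage, hflip] at this
    exact this
  choose fN hfN1 hfN2 using step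
  set n : ℕ → ℕ := fun k => Nat.rec 0 (fun k ih => fN ih k) k with hn
  have hnsucc : ∀ k, n (k + 1) = fN (n k) k := fun k => rfl
  have hn0 : n 0 = 0 := rfl
  have hmono : StrictMono n := strictMono_nat_of_lt_succ fun k => by
    rw [hnsucc k]; exact hfN1 (n k) k
  refine ⟨n, hmono, hn0, ?_⟩
  intro x hA
  set g : ℕ → Bool := toCantor x with hg
  have hgx : fromC g = x := fromC_toCantor x
  set P : ℕ → Prop := fun k => ∀ i, n k ≤ i → i < n (k + 1) → g i = true with hP
  set w : ℕ → Bool := fun i => if P (blockOf n i) then z i else g i with hw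
  have hwU : ∀ m, w ∈ U m := by
    intro m
    have hA' : {k | P k}.Infinite := by
      apply hA.mono
      intro k hk i h1 h2
      rw [hg, toCantor_mem]
      exact hk i h1 h2
    obtain ⟨k, hk, hmk⟩ := exists_ge_of_infinite hA' m
    have := hfN2 (n k) k w ?_ m hmk
    · exact this
    · intro i h1 h2
      have hb : blockOf n i = k := blockOf_eq hmono hn0 h1 (by rw [hnsucc]; exact h2)
      have hk' : P k := hk
      rw [hw]
      simp only [hb]
      rw [if_pos hk']
  have hmem : w ∈ toCantor '' F := hUsub (Set.mem_iInter.2 hwU)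
  rw [mem_image_toCantor] at hmem
  apply hup _ hmem
  intro i hi
  rw [fromC_mem] at hi
  simp only [hw] at hi
  by_cases hPi : P (blockOf n i)
  · rw [if_pos hPi] at hi
    have hsp := blockOf_spec hmono hn0 i
    have := hPi i hsp.1 hsp.2
    rw [← hgx, fromC_mem]
    exact this
  · rw [if_neg hPi] at hi
    rw [← hgx, fromC_mem]
    exact hi

/-! ### Backward direction -/

lemma backward_core {F : Set (Set ℕ)} {h : ℕ → ℕ}
    (hup : ∀ x ∈ F, ∀ y : Set ℕ, x ⊆ y → y ∈ F)
    (hfto : FinToOne h)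
    (himg : imgFam h F = {y : Set ℕ | y.Infinite}) :
    toCantor '' F ∈ residual (ℕ → Bool) := by
  classical
  have step : ∀ N : ℕ, ∃ N', N < N' ∧ ∀ i j, N' ≤ i → j < N → h j < h i := by
    intro N
    set M : ℕ := (Finset.range N).sup h with hM
    have hT : (h ⁻¹' (Set.Iic M)).Finite := by
      have : h ⁻¹' (Set.Iic M) = ⋃ v ∈ Set.Iic M, h ⁻¹' {v} := by
        ext i
        simp only [Set.mem_preimage, Set.mem_Iic, Set.mem_iUnion, Set.mem_singleton_iff]
        exact ⟨fun hi => ⟨h i, hi, rfl⟩, fun ⟨v, hv, he⟩ => he ▸ hv⟩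
      rw [this]
      exact (Set.finite_Iic M).biUnion fun v _ => hfto v
    obtain ⟨B, hB⟩ := hT.bddAbove
    refine ⟨max (N + 1) (B + 1), by omega, ?_⟩
    intro i j hi hj
    have hiT : i ∉ h ⁻¹' (Set.Iic M) := by
      intro hmem
      have := hB hmem
      omega
    have h1 : M < h i := by
      simp only [Set.mem_preimage, Set.mem_Iic, not_le] at hiT
      exact hiT
    have h2 : h j ≤ M := Finset.le_sup (Finset.mem_range.2 hj)
    omega
  choose fN hfN1 hfN2 using step
  set n : ℕ → ℕ := fun k => Nat.rec 0 (fun _ ih => fN ih) k with hn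
  have hnsucc : ∀ k, n (k + 1) = fN (n k) := fun k => rfl
  have hmono : StrictMono n := strictMono_nat_of_lt_succ fun k => by
    rw [hnsucc k]; exact hfN1 (n k)
  have key : ∀ k i j, n (k + 1) ≤ i → j < n k → h j < h i := fun k i j hi hj =>
    hfN2 (n k) i j (by rw [← hnsucc k]; exact hi) hj
  apply Filter.mem_of_superset
    (blocks_mem_residual (fun k => n k) (fun k => n (k + 3)) fun k => hmono.le_apply)
  intro f hf
  set x : Set ℕ := fromC f with hx
  set A : Set ℕ := {k | ∀ i, n k ≤ i → i < n (k + 3) → f i = true} with hA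
  have hAinf : A.Infinite := infinite_of_forall_exists hf
  set B : Set ℕ := ⋃ k ∈ A, Set.Ico (n (k + 1)) (n (k + 2)) with hB
  have hBinf : B.Infinite := by
    have hinj : Function.Injective (fun k => n (k + 1)) := by
      intro a b hab
      simp only at hab
      have : a + 1 = b + 1 := hmono.injective hab
      omega
    have himg2 : ((fun k => n (k + 1)) '' A).Infinite := hAinf.image hinj.injOn
    apply himg2.mono
    rintro _ ⟨k, hk, rfl⟩
    exact Set.mem_biUnion hk ⟨le_refl _, hmono (show k + 1 < k + 2 by omega)⟩
  have hyinf : (h '' B).Infinite := finToOne_image_infinite hfto hBinf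
  have : h '' B ∈ imgFam h F := by rw [himg]; exact hyinf
  obtain ⟨a, haF, hay⟩ := this
  have hsub : a ⊆ x := by
    intro i' hi'
    have : h i' ∈ h '' B := by rw [← hay] at *; exact Set.mem_image_of_mem h hi'
    obtain ⟨i, hiB, hih⟩ := this
    rw [hB] at hiB
    simp only [Set.mem_iUnion] at hiB
    obtain ⟨k, hkA, hik⟩ := hiB
    obtain ⟨hik1, hik2⟩ := hik
    have hc1 : n k ≤ i' := by
      by_contra hcon
      push_neg at hcon
      have := key k i i' hik1 hcon
      omega
    have hc2 : i' < n (k + 3) := by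
      by_contra hcon
      push_neg at hcon
      have := key (k + 2) i' i hcon hik2
      omega
    rw [hx, fromC_mem]
    exact hkA i' hc1 hc2
  exact ⟨x, hup a haF x hsub, toCantor_fromC f⟩

end Stmt16

/-- A semifilter `F` on ℕ is comeager in the Cantor space if and only if some
finite-to-one `h : ℕ → ℕ` maps it to the set of all infinite subsets of ℕ. -/
theorem stmt_16 (F : Set (Set ℕ)) (hF : IsSemifilter F) :
    IsMeagre ((toCantor '' F)ᶜ) ↔
      ∃ h : ℕ → ℕ, FinToOne h ∧ imgFam h F = {y : Set ℕ | y.Infinite} := by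
  open Stmt16 in
  constructor
  · intro hM
    have hres : toCantor '' F ∈ residual (ℕ → Bool) := by
      have := hM
      unfold IsMeagre at this
      rwa [compl_compl] at this
    obtain ⟨n, hmono, hn0, hkey⟩ := forward_core hF.2.2.1 hres
    have hfto : FinToOne (blockOf n) := by
      intro k
      apply (Set.finite_Ico (n k) (n (k + 1))).subset
      intro i hi
      simp only [Set.mem_preimage, Set.mem_singleton_iff] at hi
      obtain ⟨h1, h2⟩ := blockOf_spec hmono hn0 i
      rw [hi] at h1 h2
      exact ⟨h1, h2⟩
    refine ⟨blockOf n, hfto, ?_⟩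
    ext y
    constructor
    · rintro ⟨x, hxF, rfl⟩
      exact finToOne_image_infinite hfto (mem_semifilter_infinite hF hxF)
    · intro hy
      have hxF : blockOf n ⁻¹' y ∈ F := by
        apply hkey
        apply Set.Infinite.mono _ hy
        intro k hk i h1 h2
        have : blockOf n i = k := blockOf_eq hmono hn0 h1 h2
        simp only [Set.mem_preimage, Set.mem_singleton_iff, this]
        exact hk
      refine ⟨blockOf n ⁻¹' y, hxF, ?_⟩
      simp only
      apply Set.image_preimage_eq
      intro k
      exact ⟨n k, blockOf_eq hmono hn0 (le_refl _) (hmono (Nat.lt_succ_self k))⟩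
  · rintro ⟨h, hfto, himg⟩
    have hres := backward_core hF.2.2.1 hfto himg
    show ((toCantor '' F)ᶜ)ᶜ ∈ residual _
    rwa [compl_compl]
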